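/- For partitions μ ⊆ λ and an integer g, either T_{λ/μ}(0,g) < 0 or T_{λ/μ}(0,g) = g - W(λ/μ) ≥ 0, where W(λ/μ) is the width of λ/μ. -/
import Mathlib


/-- A partition: a weakly decreasing sequence of naturals, eventually zero
(finite support). `parts i` is the (i+1)-st part (0-indexed). -/
structure NatPartition where
  parts : ℕ →₀ ℕ
  antitone : ∀ ⦃i j : ℕ⦄, i ≤ j → parts j ≤ parts i

namespace NatPartition

/-- The weight `|λ|` of a partition: the sum of its parts. -/
def weight (l : NatPartition) : ℕ := l.parts.sum fun _ n => n

/-- The (i+1)-st part of the conjugate partition: the number of indices `j`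
with `parts j ≥ i + 1`. -/
def conj (l : NatPartition) (i : ℕ) : ℕ :=
  (l.parts.support.filter fun j => i + 1 ≤ l.parts j).card

end NatPartition

open NatPartition

/-- The (i+1)-st part of `ν''(λ,μ,n)`, namely `min (λ_i, max (μ_i, μ_i + n))`. -/
def nuppParts (lam mu : NatPartition) (n : ℤ) (i : ℕ) : ℕ :=
  min (lam.parts i) ((max ((mu.parts i : ℤ)) ((mu.parts i : ℤ) + n)).toNat)

/-- The weight `|ν''(λ,μ,n)|`. -/
def nuppWeight (lam mu : NatPartition) (n : ℤ) : ℕ :=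
  ∑ i ∈ lam.parts.support, nuppParts lam mu n i

/-- The (i+1)-st part of the conjugate of `ν'(λ,μ,n)`, namely
`max (μ̃_i, min (λ̃_i, λ̃_i - n))`. -/
def nupConj (lam mu : NatPartition) (n : ℤ) (i : ℕ) : ℕ :=
  (max ((mu.conj i : ℤ)) (min ((lam.conj i : ℤ)) ((lam.conj i : ℤ) - n))).toNat

/-- The (i+1)-st part of `ν'(λ,μ,n)`, obtained by conjugating back. -/
def nupParts (lam mu : NatPartition) (n : ℤ) (i : ℕ) : ℕ :=
  ((Finset.range (lam.parts 0)).filter fun t => i + 1 ≤ nupConj lam mu n t).card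

/-- The weight `|ν'(λ,μ,n)|` (computed as the sum of the parts of its conjugate). -/
def nupWeight (lam mu : NatPartition) (n : ℤ) : ℕ :=
  ∑ i ∈ Finset.range (lam.parts 0), nupConj lam mu n i

/-- The width `W(λ/μ) = max_i (λ_i - μ_i)`. -/
def skewWidth (lam mu : NatPartition) : ℕ :=
  lam.parts.support.sup fun i => lam.parts i - mu.parts i

/-- The height `H(λ/μ) = max_i (λ̃_i - μ̃_i)`. -/
def skewHeight (lam mu : NatPartition) : ℕ :=
  (Finset.range (lam.parts 0)).sup fun i => lam.conj i - mu.conj i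

/-- Containment `ν'(λ,μ,a) ⊆ ν''(λ,μ,b)` (partwise inequality). -/
def nupSubNupp (lam mu : NatPartition) (a b : ℤ) : Prop :=
  ∀ i, nupParts lam mu a i ≤ nuppParts lam mu b i

/-- The set of which the threshold number `T_{λ/μ}(f,g)` is the greatest element. -/
def threshSet (lam mu : NatPartition) (f g : ℤ) : Set ℤ :=
  {t : ℤ | nupSubNupp lam mu (f - t) (g - t)}

lemma conj_ge_iff (l : NatPartition) (i j : ℕ) :
    i + 1 ≤ l.conj j ↔ j + 1 ≤ l.parts i := by
  constructor
  · intro h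
    dsimp [NatPartition.conj] at h
    obtain ⟨k, hk, hik⟩ : ∃ k ∈ (l.parts.support.filter fun k => j + 1 ≤ l.parts k), i ≤ k := by
      by_contra hc
      push_neg at hc
      have hss : (l.parts.support.filter fun k => j + 1 ≤ l.parts k) ⊆ Finset.range i :=
        fun k hk => Finset.mem_range.mpr (hc k hk)
      have := Finset.card_le_card hss
      simp only [Finset.card_range] at this
      omega
    exact le_trans (Finset.mem_filter.mp hk).2 (l.antitone hik)
  · intro h
    dsimp [NatPartition.conj]
    have hsub : Finset.range (i + 1) ⊆ l.parts.support.filter fun k => j + 1 ≤ l.parts k := by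
      intro k hk
      have hk' : k ≤ i := Nat.lt_succ_iff.mp (Finset.mem_range.mp hk)
      have h2 : j + 1 ≤ l.parts k := le_trans h (l.antitone hk')
      exact Finset.mem_filter.mpr ⟨Finsupp.mem_support_iff.mpr (by omega), h2⟩
    calc i + 1 = (Finset.range (i + 1)).card := by simp
    _ ≤ _ := Finset.card_le_card hsub

lemma conj_mono (lam mu : NatPartition) (hsub : ∀ i, mu.parts i ≤ lam.parts i) (j : ℕ) :
    mu.conj j ≤ lam.conj j := by
  dsimp [NatPartition.conj]
  apply Finset.card_le_card
  intro k hk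
  obtain ⟨hk1, hk2⟩ := Finset.mem_filter.mp hk
  have h2 : j + 1 ≤ lam.parts k := le_trans hk2 (hsub k)
  exact Finset.mem_filter.mpr ⟨Finsupp.mem_support_iff.mpr (by omega), h2⟩

lemma nupConj_of_nonpos (lam mu : NatPartition) (hsub : ∀ i, mu.parts i ≤ lam.parts i)
    (n : ℤ) (hn : n ≤ 0) (j : ℕ) : nupConj lam mu n j = lam.conj j := by
  have h1 := conj_mono lam mu hsub j
  dsimp [nupConj]
  have hmin : min ((lam.conj j : ℤ)) ((lam.conj j : ℤ) - n) = (lam.conj j : ℤ) := by omega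
  rw [hmin]
  have hmax : max ((mu.conj j : ℤ)) ((lam.conj j : ℤ)) = (lam.conj j : ℤ) := by
    exact max_eq_right (by exact_mod_cast h1)
  rw [hmax, Int.toNat_natCast]

lemma nupParts_of_nonpos (lam mu : NatPartition) (hsub : ∀ i, mu.parts i ≤ lam.parts i)
    (n : ℤ) (hn : n ≤ 0) (i : ℕ) : nupParts lam mu n i = lam.parts i := by
  dsimp [nupParts]
  have heq : ((Finset.range (lam.parts 0)).filter fun t => i + 1 ≤ nupConj lam mu n t)
      = (Finset.range (lam.parts 0)).filter fun t => t < lam.parts i := by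
    apply Finset.filter_congr
    intro t _
    rw [nupConj_of_nonpos lam mu hsub n hn t, conj_ge_iff]
    omega
  rw [heq]
  have : (Finset.range (lam.parts 0)).filter (fun t => t < lam.parts i)
      = Finset.range (lam.parts i) := by
    ext t
    simp only [Finset.mem_filter, Finset.mem_range]
    have := lam.antitone (Nat.zero_le i)
    omega
  rw [this, Finset.card_range]

lemma parts_le_width (lam mu : NatPartition) (i : ℕ) :
    lam.parts i ≤ mu.parts i + skewWidth lam mu := by
  by_cases h : i ∈ lam.parts.support
  · have := Finset.le_sup (f := fun i => lam.parts i - mu.parts i) h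
    change lam.parts i - mu.parts i ≤ skewWidth lam mu at this
    omega
  · have : lam.parts i = 0 := Finsupp.notMem_support_iff.mp h
    omega

/-- Either `T_{λ/μ}(0,g) < 0` or `T_{λ/μ}(0,g) = g - W(λ/μ) ≥ 0`. -/
theorem stmt10 (lam mu : NatPartition) (hsub : ∀ i, mu.parts i ≤ lam.parts i)
    (g T : ℤ) (hT : IsGreatest (threshSet lam mu 0 g) T) :
    T < 0 ∨ (T = g - (skewWidth lam mu : ℤ) ∧ 0 ≤ T) := by
  rcases lt_or_ge T 0 with h | h
  · exact Or.inl h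
  right
  refine ⟨?_, h⟩
  set W := skewWidth lam mu with hW
  -- membership characterization for nonnegative t
  have mem_iff : ∀ t : ℤ, 0 ≤ t → (t ∈ threshSet lam mu 0 g ↔
      ∀ i, (lam.parts i : ℤ) ≤ max ((mu.parts i : ℤ)) ((mu.parts i : ℤ) + (g - t))) := by
    intro t ht
    have hnp : (0 : ℤ) - t ≤ 0 := by omega
    constructor
    · intro hmem i
      have := hmem i
      rw [nupParts_of_nonpos lam mu hsub _ hnp i] at this
      dsimp [nuppParts] at this
      have h1 : lam.parts i ≤ (max ((mu.parts i : ℤ)) ((mu.parts i : ℤ) + (g - t))).toNat := by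
        omega
      have h0 : (0 : ℤ) ≤ max ((mu.parts i : ℤ)) ((mu.parts i : ℤ) + (g - t)) :=
        le_trans (by positivity) (le_max_left _ _)
      exact (Int.le_toNat h0).mp h1
    · intro hall i
      show nupParts lam mu (0 - t) i ≤ nuppParts lam mu (g - t) i
      rw [nupParts_of_nonpos lam mu hsub _ hnp i]
      dsimp [nuppParts]
      have h0 : (0 : ℤ) ≤ max ((mu.parts i : ℤ)) ((mu.parts i : ℤ) + (g - t)) :=
        le_trans (by positivity) (le_max_left _ _)
      have := (Int.le_toNat h0).mpr (hall i)
      omega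
  by_cases hW0 : W = 0
  · -- then λ = μ and every nonneg t is in the set: contradiction with maximality
    exfalso
    have hmem : T + 1 ∈ threshSet lam mu 0 g := by
      rw [mem_iff (T + 1) (by omega)]
      intro i
      have := parts_le_width lam mu i
      rw [← hW, hW0] at this
      exact le_trans (by exact_mod_cast this) (le_max_left _ _)
    have := hT.2 hmem
    omega
  · -- W > 0 : from T ∈ set, get T ≤ g - W
    have hTle : T ≤ g - (W : ℤ) := by
      obtain ⟨i, hi, hieq⟩ : ∃ i ∈ lam.parts.support, lam.parts i - mu.parts i = W := by
        have hne : lam.parts.support.Nonempty := by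
          by_contra hne
          rw [Finset.not_nonempty_iff_eq_empty] at hne
          rw [hW] at hW0
          dsimp [skewWidth] at hW0
          rw [hne] at hW0
          simp at hW0
        obtain ⟨i, hi, hieq⟩ := Finset.exists_mem_eq_sup _ hne
          (fun i => lam.parts i - mu.parts i)
        exact ⟨i, hi, hieq.symm⟩
      have hgt : mu.parts i < lam.parts i := by
        have := hsub i
        omega
      have := (mem_iff T h).mp hT.1 i
      rcases max_cases ((mu.parts i : ℤ)) ((mu.parts i : ℤ) + (g - T)) with ⟨he, _⟩ | ⟨he, _⟩
      · rw [he] at this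
        exact absurd this (by exact_mod_cast not_le.mpr hgt)
      · rw [he] at this
        have hcast : ((lam.parts i : ℤ)) - (mu.parts i : ℤ) = (W : ℤ) := by
          have := hsub i
          omega
        omega
    have hWmem : g - (W : ℤ) ∈ threshSet lam mu 0 g := by
      rw [mem_iff (g - (W : ℤ)) (by omega)]
      intro i
      have := parts_le_width lam mu i
      have h2 : (lam.parts i : ℤ) ≤ (mu.parts i : ℤ) + (g - (g - (W : ℤ))) := by
        omega
      exact le_trans h2 (le_max_right _ _)
    have := hT.2 hWmem
    omega
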